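/- A Banach space is isometrically isomorphic to a quotient of a closed subspace of an L^p-space if and only if it is isometrically isomorphic to a closed subspace of a quotient of an L^p-space. -/

import Mathlib

open MeasureTheory Metric

section Aux

variable {M : Type*} [NormedAddCommGroup M] [NormedSpace ℂ M] [CompleteSpace M]

omit [CompleteSpace M] in
/-- Quotient norm of a coset equals the distance to the subspace. -/
theorem norm_quot_mk_eq_infDist (N : Submodule ℂ M) (x : M) :
    ‖(Submodule.Quotient.mk x : M ⧸ N)‖ = infDist x (N : Set M) :=
  QuotientAddGroup.norm_mk (S := N.toAddSubgroup) x

/-- A quotient of a closed subspace embeds isometrically as a closed subspace of a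
quotient of the ambient space. -/
theorem qsl_to_sql (S : Submodule ℂ M) (hS : IsClosed (S : Set M))
    (N : Submodule ℂ S) (hN : IsClosed (N : Set S)) :
    ∃ (N' : Submodule ℂ M) (S' : Submodule ℂ (M ⧸ N')),
      IsClosed (N' : Set M) ∧ IsClosed (S' : Set (M ⧸ N')) ∧
        Nonempty ((S ⧸ N) ≃ₗᵢ[ℂ] S') := by
  set N' : Submodule ℂ M := N.map S.subtype with hN'def
  have hval : (N' : Set M) = (Subtype.val : S → M) '' (N : Set S) := by
    simp [hN'def, Submodule.map_coe, Submodule.coe_subtype]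
  have hN' : IsClosed (N' : Set M) := by
    rw [hval]
    exact hS.isClosedEmbedding_subtypeVal.isClosedMap _ hN
  have hle : N ≤ N'.comap S.subtype := fun x hx => Submodule.mem_map_of_mem hx
  -- the induced map `S ⧸ N → M ⧸ N'`
  let f0 : (S ⧸ N) →ₗ[ℂ] (M ⧸ N') := N.mapQ N' S.subtype hle
  have hnorm : ∀ y : S ⧸ N, ‖f0 y‖ = ‖y‖ := by
    intro y
    obtain ⟨x, rfl⟩ := Submodule.Quotient.mk_surjective N y
    have h1 : f0 (Submodule.Quotient.mk x) = Submodule.Quotient.mk (x : M) := rfl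
    rw [h1, norm_quot_mk_eq_infDist, norm_quot_mk_eq_infDist, hval,
      infDist_image isometry_subtype_coe]
  let f : (S ⧸ N) →ₗᵢ[ℂ] (M ⧸ N') := ⟨f0, hnorm⟩
  refine ⟨N', LinearMap.range f0, hN', ?_, ⟨f.equivRange⟩⟩
  haveI : CompleteSpace S := hS.completeSpace_coe
  haveI : T0Space (M ⧸ N') := by
    letI := Submodule.Quotient.normedAddCommGroup N' (hS := hN')
    infer_instance
  have : IsClosed (X := M ⧸ N') (Set.range (⇑f : (S ⧸ N) → M ⧸ N')) :=
    (f.isometry.isUniformInducing.isComplete_range).isClosed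
  simpa [f, LinearMap.coe_range] using this

omit [CompleteSpace M] in
/-- A closed subspace of a quotient is isometrically a quotient of a closed subspace. -/
theorem sql_to_qsl (N : Submodule ℂ M) (hN : IsClosed (N : Set M))
    (S : Submodule ℂ (M ⧸ N)) (hS : IsClosed (S : Set (M ⧸ N))) :
    ∃ (S' : Submodule ℂ M) (N' : Submodule ℂ S'),
      IsClosed (S' : Set M) ∧ IsClosed (N' : Set S') ∧
        Nonempty ((S' ⧸ N') ≃ₗᵢ[ℂ] S) := by
  have hmkQcont : Continuous N.mkQ :=
    AddMonoidHomClass.continuous_of_bound N.mkQ 1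
      (fun x => by simpa using Submodule.Quotient.norm_mk_le N x)
  set S' : Submodule ℂ M := S.comap N.mkQ with hS'def
  have hS' : IsClosed (S' : Set M) := hS.preimage hmkQcont
  set N' : Submodule ℂ S' := N.comap S'.subtype with hN'def
  have hN' : IsClosed (N' : Set S') := hN.preimage continuous_subtype_val
  have hNS' : (N : Set M) ⊆ (S' : Set M) := by
    intro x hx
    simp only [hS'def, SetLike.mem_coe, Submodule.mem_comap, Submodule.mkQ_apply]
    have : (Submodule.Quotient.mk x : M ⧸ N) = 0 := (Submodule.Quotient.mk_eq_zero N).2 hx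
    rw [this]; exact S.zero_mem
  have hval : (Subtype.val : S' → M) '' (N' : Set S') = (N : Set M) := by
    have : (N' : Set S') = (Subtype.val : S' → M) ⁻¹' (N : Set M) := rfl
    rw [this, Set.image_preimage_eq_inter_range, Subtype.range_coe]
    exact Set.inter_eq_left.2 hNS'
  -- the map `S' → S`
  have hmem : ∀ x : S', N.mkQ (x : M) ∈ S := fun x => x.2
  let g0 : S' →ₗ[ℂ] S := LinearMap.codRestrict S (N.mkQ.comp S'.subtype) hmem
  have hker : N' ≤ LinearMap.ker g0 := by
    intro x hx
    have : N.mkQ (x : M) = 0 := (Submodule.Quotient.mk_eq_zero N).2 hx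
    exact Subtype.ext this
  let g1 : (S' ⧸ N') →ₗ[ℂ] S := N'.liftQ g0 hker
  have hg1 : ∀ x : S', g1 (Submodule.Quotient.mk x) = g0 x := fun x => rfl
  have hnorm : ∀ y : S' ⧸ N', ‖g1 y‖ = ‖y‖ := by
    intro y
    obtain ⟨x, rfl⟩ := Submodule.Quotient.mk_surjective N' y
    have h1 : ‖g1 (Submodule.Quotient.mk x)‖ = ‖N.mkQ (x : M)‖ := rfl
    rw [h1, norm_quot_mk_eq_infDist, Submodule.mkQ_apply, norm_quot_mk_eq_infDist,
      ← hval, infDist_image isometry_subtype_coe]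
  let g : (S' ⧸ N') →ₗᵢ[ℂ] S := ⟨g1, hnorm⟩
  have hsurj : Function.Surjective g := by
    rintro ⟨s, hs⟩
    obtain ⟨x, hx⟩ := Submodule.Quotient.mk_surjective N s
    have hxS' : x ∈ S' := by
      simp only [hS'def, Submodule.mem_comap, Submodule.mkQ_apply, hx]; exact hs
    refine ⟨Submodule.Quotient.mk (⟨x, hxS'⟩ : S'), ?_⟩
    apply Subtype.ext
    exact hx
  exact ⟨S', N', hS', hN', ⟨LinearIsometryEquiv.ofSurjective g hsurj⟩⟩

end Aux

/-- A Banach space is a `QSL_p`-space if it is isometrically isomorphic to a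
quotient of a closed subspace of an `L^p`-space `L^p(X, μ)`. -/
def IsQSLp (p : ENNReal) [Fact (1 ≤ p)] (E : Type*)
    [NormedAddCommGroup E] [NormedSpace ℂ E] : Prop :=
  ∃ (X : Type) (_ : MeasurableSpace X) (μ : Measure X)
    (S : Submodule ℂ (Lp ℂ p μ)) (N : Submodule ℂ S),
      IsClosed (S : Set (Lp ℂ p μ)) ∧ IsClosed (N : Set S) ∧
        Nonempty (E ≃ₗᵢ[ℂ] (S ⧸ N))

/-- A Banach space is an `SQL_p`-space if it is isometrically isomorphic to a
closed subspace of a quotient (by a closed subspace) of an `L^p`-space. -/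
def IsSQLp (p : ENNReal) [Fact (1 ≤ p)] (E : Type*)
    [NormedAddCommGroup E] [NormedSpace ℂ E] : Prop :=
  ∃ (X : Type) (_ : MeasurableSpace X) (μ : Measure X)
    (N : Submodule ℂ (Lp ℂ p μ)) (S : Submodule ℂ ((Lp ℂ p μ) ⧸ N)),
      IsClosed (N : Set (Lp ℂ p μ)) ∧ IsClosed (S : Set ((Lp ℂ p μ) ⧸ N)) ∧
        Nonempty (E ≃ₗᵢ[ℂ] S)

/-- A Banach space is isometrically isomorphic to a quotient of a
closed subspace of an `L^p`-space if and only if it is isometrically isomorphic to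
a closed subspace of a quotient of an `L^p`-space (`1 < p < ∞`). -/
theorem stmt7 (p : ENNReal) [Fact (1 ≤ p)] (hp : 1 < p) (hp' : p ≠ ⊤)
    (E : Type*) [NormedAddCommGroup E] [NormedSpace ℂ E] [CompleteSpace E] :
    IsQSLp p E ↔ IsSQLp p E := by
  constructor
  · rintro ⟨X, mX, μ, S, N, hS, hN, ⟨e⟩⟩
    obtain ⟨N', S', hN', hS', ⟨e'⟩⟩ := qsl_to_sql S hS N hN
    exact ⟨X, mX, μ, N', S', hN', hS', ⟨e.trans e'⟩⟩
  · rintro ⟨X, mX, μ, N, S, hN, hS, ⟨e⟩⟩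
    obtain ⟨S', N', hS', hN', ⟨e'⟩⟩ := sql_to_qsl N hN S hS
    exact ⟨X, mX, μ, S', N', hS', hN', ⟨e.trans e'.symm⟩⟩
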